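/- The actions $a_+$ and $a_-$ of $\mathrm{Homeo}_0(\mathbb{S}^1)$ on the closed annulus $\mathbb{A} = [0,1] \times \mathbb{S}^1$ are conjugate via the homeomorphism $h(r, \theta) = (r, \theta + r)$ of $\mathbb{A}$; that is, for every $f \in \mathrm{Homeo}_0(\mathbb{S}^1)$, $h \circ a_-(f) = a_+(f) \circ h$ (up to appropriate orientation of the identity). -/

import Mathlib

noncomputable section

/-- The circle `ℝ/ℤ`. -/
abbrev S1 : Type := AddCircle (1 : ℝ)

/-- The projection `ℝ → ℝ/ℤ`. -/
def pr : ℝ → S1 := fun x => (x : S1)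

instance : Fact ((0 : ℝ) < 1) := ⟨one_pos⟩

/-- A canonical representative (lift in `[0,1)`) of a point of the circle. -/
def rep (θ : S1) : ℝ := (AddCircle.equivIco 1 0 θ : ℝ)

/-- `F` is a lift of the circle homeomorphism `f`: an increasing homeomorphism of `ℝ`
commuting with integer translations and projecting to `f`. -/
def IsLift (f : S1 ≃ₜ S1) (F : ℝ ≃ₜ ℝ) : Prop :=
  StrictMono F ∧ (∀ x : ℝ, F (x + 1) = F x + 1) ∧ ∀ x : ℝ, f (pr x) = pr (F x)

/-- The elementary action `a₋` on the annulus `[0,1] × S¹ ⊆ ℝ × S¹`, computed using the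
lift `F` of `f`:  `(r, θ) ↦ (F(θ̃) - F(θ̃ - r), f θ)` (the first coordinate does not depend
on the chosen lifts). -/
def aMinus (f : S1 ≃ₜ S1) (F : ℝ ≃ₜ ℝ) : ℝ × S1 → ℝ × S1 :=
  fun p => (F (rep p.2) - F (rep p.2 - p.1), f p.2)

/-- The elementary action `a₊` on the annulus `[0,1] × S¹ ⊆ ℝ × S¹`:
`(r, θ) ↦ (F(θ̃ + r) - F(θ̃), f θ)`. -/
def aPlus (f : S1 ≃ₜ S1) (F : ℝ ≃ₜ ℝ) : ℝ × S1 → ℝ × S1 :=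
  fun p => (F (rep p.2 + p.1) - F (rep p.2), f p.2)


lemma pr_rep (θ : S1) : pr (rep θ) = θ := (AddCircle.equivIco 1 0).symm_apply_apply θ

lemma pr_eq_iff (x y : ℝ) (h : pr x = pr y) : ∃ n : ℤ, y = x + n := by
  rw [pr, pr, QuotientAddGroup.eq_iff_sub_mem, AddSubgroup.mem_zmultiples_iff] at h
  obtain ⟨n, hn⟩ := h
  refine ⟨-n, ?_⟩
  have : (n : ℝ) * 1 = x - y := by rw [← zsmul_eq_mul]; exact hn
  push_cast
  linarith

lemma lift_int (F : ℝ ≃ₜ ℝ) (h1 : ∀ x : ℝ, F (x + 1) = F x + 1) (n : ℤ) (x : ℝ) :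
    F (x + n) = F x + n := by
  induction n using Int.induction_on with
  | zero => simp
  | succ k ih =>
    have := h1 (x + k)
    push_cast
    push_cast at ih
    rw [← add_assoc, this, ih]; ring
  | pred k ih =>
    have := h1 (x + (-k - 1))
    push_cast
    push_cast at ih
    have h2 : x + (-(k:ℝ) - 1) + 1 = x + -(k:ℝ) := by ring
    rw [h2] at this
    linarith [this, ih]

/-- The conjugacy `h(r, θ) = (r, θ + r)` between `a₊` and `a₋`:
for every orientation-preserving homeomorphism `f` of the circle (with lift `F`),
`h ∘ a₊(f) = a₋(f) ∘ h` on the annulus. -/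
theorem stmt3 (f : S1 ≃ₜ S1) (F : ℝ ≃ₜ ℝ) (hF : IsLift f F)
    (hconj : ℝ × S1 → ℝ × S1) (hdef : hconj = fun p => (p.1, p.2 + pr p.1))
    (p : ℝ × S1) (hp : p.1 ∈ Set.Icc (0 : ℝ) 1) :
    hconj (aPlus f F p) = aMinus f F (hconj p):= by
  obtain ⟨hmono, h1, hlift⟩ := hF
  obtain ⟨r, θ⟩ := p
  subst hdef
  simp only [aPlus, aMinus]
  -- relate rep (θ + pr r) to rep θ + r
  have hpr : pr (rep θ + r) = θ + pr r := by
    have : pr (rep θ + r) = pr (rep θ) + pr r := by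
      simp [pr]
    rw [this, pr_rep]
  obtain ⟨n, hn⟩ := pr_eq_iff _ _ (hpr.trans (pr_rep (θ + pr r)).symm)
  -- hn : rep (θ + pr r) = rep θ + r + n
  have hF1 : F (rep (θ + pr r)) = F (rep θ + r) + n := by
    rw [hn, lift_int F h1]
  have hF2 : F (rep (θ + pr r) - r) = F (rep θ) + n := by
    have : rep (θ + pr r) - r = rep θ + n := by rw [hn]; ring
    rw [this, lift_int F h1]
  refine Prod.ext ?_ ?_
  · simp only
    rw [hF1, hF2]; ring
  · simp only
    have e1 : f (θ + pr r) = pr (F (rep θ + r)) := by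
      rw [← hpr, hlift]
    have e2 : f θ = pr (F (rep θ)) := by
      rw [← pr_rep θ, hlift, pr_rep]
    rw [e1, e2]
    simp only [pr]
    rw [← AddCircle.coe_add]
    ring_nf
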